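/- arXiv:2507.10495 — 3 statements merged into one kernel-verified Lean document; each statement's English description precedes it below -/
import Mathlib

section
/- (Lemma 3.1.) There exists a constant C > 0, depending only on A, n, m₁ and m₂, such that for every solution u₁, u₂ of the system and all real numbers 0 < r₁ < r₂ with r₂ ≤ 2r₁ one has ∫_{B_{r₂}∖B_{r₁}} |u₁| dx ≥ C (r₂−r₁)^{m₁} ∫_{B_{r₁}} f₁(|u₂|) dx and ∫_{B_{r₂}∖B_{r₁}} |u₂| dx ≥ C (r₂−r₁)^{m₂} ∫_{B_{r₁}} f₂(|u₁|) dx. -/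
open MeasureTheory Real Set Filter

noncomputable section

/-- Euclidean space `ℝⁿ`. -/
abbrev En (n : ℕ) : Type := EuclideanSpace ℝ (Fin n)

/-- First-order partial derivative in the `i`-th coordinate direction. -/
def pderiv1 (n : ℕ) (i : Fin n) (φ : En n → ℝ) : En n → ℝ :=
  fun x => fderiv ℝ φ x (EuclideanSpace.single i 1)

/-- Higher-order partial derivative `∂^α` for a multi-index `α`. -/
def pderivMulti (n : ℕ) (α : Fin n → ℕ) (φ : En n → ℝ) : En n → ℝ :=
  ((List.ofFn fun i : Fin n => (pderiv1 n i)^[α i]).foldr (· ∘ ·) id) φ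

/-- The (finite) set of multi-indices `α` with `|α| = m`. -/
def multiIndices (n m : ℕ) : Finset (Fin n → ℕ) :=
  (Fintype.piFinset fun _ : Fin n => Finset.range (m + 1)).filter fun α => ∑ i, α i = m

/-- Caratheodory families `a_α`, `b_α` satisfying `|a_α(x,ζ)| + |b_α(x,ζ)| ≤ A|ζ|`. -/
def CaraBound (n : ℕ) (A : ℝ) (a b : (Fin n → ℕ) → En n → ℝ → ℝ) : Prop :=
  (∀ α ζ, Measurable fun x => a α x ζ) ∧
  (∀ α ζ, Measurable fun x => b α x ζ) ∧
  (∀ α x, Continuous fun ζ => a α x ζ) ∧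
  (∀ α x, Continuous fun ζ => b α x ζ) ∧
  (∀ α, ∀ᵐ x : En n ∂volume, ∀ ζ : ℝ, |a α x ζ| + |b α x ζ| ≤ A * |ζ|)

/-- `f : [0,∞) → [0,∞)` non-decreasing and convex. -/
def StdF (f : ℝ → ℝ) : Prop :=
  MonotoneOn f (Ici 0) ∧ ConvexOn ℝ (Ici 0) f ∧ ∀ ζ : ℝ, 0 ≤ ζ → 0 ≤ f ζ

/-- `g : [1,∞) → (0,∞)` non-decreasing, continuous, with
`liminf_{ζ→∞} g(ζ^κ)/g(ζ) > 0` for every `κ ∈ (0,1)`. -/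
def StdG (g : ℝ → ℝ) : Prop :=
  MonotoneOn g (Ici 1) ∧ ContinuousOn g (Ici 1) ∧ (∀ ζ : ℝ, 1 ≤ ζ → 0 < g ζ) ∧
  ∀ κ ∈ Ioo (0:ℝ) 1, ∃ ε > (0:ℝ), ∃ M ≥ (1:ℝ), ∀ ζ ≥ M, ε ≤ g (ζ ^ κ) / g ζ

/-- `h : (0,1] → (0,∞)` non-decreasing, continuous, with
`liminf_{ζ→0⁺} h(ζ)/h(ζ^κ) > 0` for every `κ ∈ (0,1)`. -/
def StdH (h : ℝ → ℝ) : Prop :=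
  MonotoneOn h (Ioc 0 1) ∧ ContinuousOn h (Ioc 0 1) ∧ (∀ ζ ∈ Ioc (0:ℝ) 1, 0 < h ζ) ∧
  ∀ κ ∈ Ioo (0:ℝ) 1, ∃ ε > (0:ℝ), ∃ δ ∈ Ioo (0:ℝ) 1, ∀ ζ ∈ Ioo (0:ℝ) δ, ε ≤ h ζ / h (ζ ^ κ)

/-- Weak solution of the system
`Σ_{|α|=m₁} ∂^α a_α(x,u₁) ≥ f₁(u₂)`, `Σ_{|α|=m₂} ∂^α b_α(x,u₂) ≥ f₂(u₁)` in `ℝⁿ`. -/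
def IsSolution (n m₁ m₂ : ℕ)
    (a b : (Fin n → ℕ) → En n → ℝ → ℝ) (f₁ f₂ : ℝ → ℝ)
    (u₁ u₂ : En n → ℝ) : Prop :=
  LocallyIntegrable u₁ volume ∧ LocallyIntegrable u₂ volume ∧
  LocallyIntegrable (fun x => f₁ |u₂ x|) volume ∧
  LocallyIntegrable (fun x => f₂ |u₁ x|) volume ∧
  ∀ φ : En n → ℝ, ContDiff ℝ (⊤ : ℕ∞) φ → HasCompactSupport φ → (∀ x, 0 ≤ φ x) →
    ((-1 : ℝ) ^ m₁ * ∫ x, ∑ α ∈ multiIndices n m₁, a α x (u₁ x) * pderivMulti n α φ x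
        ≥ ∫ x, f₁ |u₂ x| * φ x) ∧
    ((-1 : ℝ) ^ m₂ * ∫ x, ∑ α ∈ multiIndices n m₂, b α x (u₂ x) * pderivMulti n α φ x
        ≥ ∫ x, f₂ |u₁ x| * φ x)

section AuxLemmas
open Convolution Metric

def pdList (n : ℕ) (l : List (Fin n)) (φ : En n → ℝ) : En n → ℝ :=
  l.foldr (fun i ψ => pderiv1 n i ψ) φ
@[simp] lemma pdList_nil (n : ℕ) (φ : En n → ℝ) : pdList n [] φ = φ := rfl
@[simp] lemma pdList_cons (n : ℕ) (i : Fin n) (l : List (Fin n)) (φ : En n → ℝ) :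
    pdList n (i :: l) φ = pderiv1 n i (pdList n l φ) := rfl
lemma pdList_append (n : ℕ) (l₁ l₂ : List (Fin n)) (φ : En n → ℝ) :
    pdList n (l₁ ++ l₂) φ = pdList n l₁ (pdList n l₂ φ) := by
  simp [pdList, List.foldr_append]
lemma pdList_replicate (n : ℕ) (k : ℕ) (i : Fin n) (φ : En n → ℝ) :
    pdList n (List.replicate k i) φ = (pderiv1 n i)^[k] φ := by
  induction k with
  | zero => rfl
  | succ k ih => simp [List.replicate_succ, ih, Function.iterate_succ_apply']
def dirs (n : ℕ) (α : Fin n → ℕ) : List (Fin n) :=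
  (List.ofFn fun i : Fin n => List.replicate (α i) i).flatten
lemma dirs_length (n : ℕ) (α : Fin n → ℕ) : (dirs n α).length = ∑ i, α i := by
  simp [dirs, List.length_flatten, List.map_ofFn, Function.comp_def, List.sum_ofFn]
lemma pderivMulti_eq_pdList (n : ℕ) (α : Fin n → ℕ) (φ : En n → ℝ) :
    pderivMulti n α φ = pdList n (dirs n α) φ := by
  unfold pderivMulti dirs
  rw [List.ofFn_eq_map, List.ofFn_eq_map]
  generalize (List.finRange n) = l
  induction l with
  | nil => rfl
  | cons i l ih =>
      simp only [List.map_cons, List.foldr_cons, List.flatten_cons, pdList_append,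
        pdList_replicate, Function.comp_apply, ih]

lemma pderiv1_contDiff (n : ℕ) (i : Fin n) {ψ : En n → ℝ} (hψ : ContDiff ℝ (⊤:ℕ∞) ψ) :
    ContDiff ℝ (⊤:ℕ∞) (pderiv1 n i ψ) := by
  have : pderiv1 n i ψ =
      (fun L : En n →L[ℝ] ℝ => L (EuclideanSpace.single i 1)) ∘ (fderiv ℝ ψ) := rfl
  rw [this]
  exact ((ContinuousLinearMap.apply ℝ ℝ (EuclideanSpace.single i 1)).contDiff).comp
    (hψ.fderiv_right (m := (⊤:ℕ∞)) (by simp))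

lemma pderiv1_support (n : ℕ) (i : Fin n) (ψ : En n → ℝ) :
    Function.support (pderiv1 n i ψ) ⊆ tsupport ψ := by
  intro x hx
  have : fderiv ℝ ψ x ≠ 0 := by
    intro h; apply hx; simp [pderiv1, h]
  exact support_fderiv_subset ℝ (by simpa [Function.mem_support] using this)

lemma pdList_contDiff (n : ℕ) (l : List (Fin n)) {ψ : En n → ℝ} (hψ : ContDiff ℝ (⊤:ℕ∞) ψ) :
    ContDiff ℝ (⊤:ℕ∞) (pdList n l ψ) := by
  induction l with
  | nil => exact hψ
  | cons i l ih => exact pderiv1_contDiff n i ih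

lemma pdList_tsupport (n : ℕ) (l : List (Fin n)) (ψ : En n → ℝ) :
    tsupport (pdList n l ψ) ⊆ tsupport ψ := by
  induction l with
  | nil => exact le_rfl
  | cons i l ih =>
      refine (closure_minimal ?_ isClosed_closure)
      exact (pderiv1_support n i _).trans ih

lemma pdList_hasCompactSupport (n : ℕ) (l : List (Fin n)) {ψ : En n → ℝ}
    (hψ : HasCompactSupport ψ) : HasCompactSupport (pdList n l ψ) :=
  IsCompact.of_isClosed_subset hψ isClosed_closure (pdList_tsupport n l ψ)

lemma pderiv1_eqOn_zero (n : ℕ) (i : Fin n) {ψ : En n → ℝ} {U : Set (En n)} (hU : IsOpen U)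
    {d : ℝ} (hψ : EqOn ψ (fun _ => d) U) : EqOn (pderiv1 n i ψ) (fun _ => (0:ℝ)) U := by
  intro x hx
  have h1 : ψ =ᶠ[nhds x] (fun _ => d) :=
    eventually_of_mem (hU.mem_nhds hx) hψ
  have : fderiv ℝ ψ x = fderiv ℝ (fun _ : En n => d) x := h1.fderiv_eq
  simp [pderiv1, this]

lemma pdList_eqOn_zero (n : ℕ) (l : List (Fin n)) (hl : l ≠ []) {ψ : En n → ℝ}
    {U : Set (En n)} (hU : IsOpen U) {d : ℝ} (hψ : EqOn ψ (fun _ => d) U) :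
    EqOn (pdList n l ψ) (fun _ => (0:ℝ)) U := by
  induction l with
  | nil => exact absurd rfl hl
  | cons i l ih =>
      rcases eq_or_ne l [] with rfl | hne
      · simpa using pderiv1_eqOn_zero n i hU hψ
      · exact pderiv1_eqOn_zero n i hU (ih hne)
abbrev Lmul : ℝ →L[ℝ] ℝ →L[ℝ] ℝ := ContinuousLinearMap.mul ℝ ℝ

lemma conv_abs_le (n : ℕ) (f h : En n → ℝ) (M : ℝ) (hM : ∀ t, |f t| ≤ M)
    (hh : Continuous h) (hch : HasCompactSupport h) (x : En n) :
    |(f ⋆[Lmul] h) x| ≤ M * ∫ t, |h t| := by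
  have hint : Integrable (fun t => |h t|) volume :=
    (hh.integrable_of_hasCompactSupport hch).norm
  have hM0 : 0 ≤ M := le_trans (abs_nonneg _) (hM x)
  rw [convolution_def]
  calc |∫ t, Lmul (f t) (h (x - t))| ≤ ∫ t, |f t| * |h (x - t)| := by
        simpa [Real.norm_eq_abs, abs_mul] using
          norm_integral_le_integral_norm (fun t => f t * h (x - t)) (μ := volume)
    _ ≤ ∫ t, M * |h (x - t)| := by
        refine integral_mono_of_nonneg
          (Eventually.of_forall fun t => mul_nonneg (abs_nonneg _) (abs_nonneg _))
          ((hint.comp_sub_left x).const_mul M) (Eventually.of_forall fun t => ?_)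
        exact mul_le_mul_of_nonneg_right (hM t) (abs_nonneg _)
    _ = M * ∫ t, |h t| := by
        rw [MeasureTheory.integral_const_mul, integral_sub_left_eq_self (fun t => |h t|) volume x]
lemma pderiv1_convolution (n : ℕ) (i : Fin n) {f g : En n → ℝ}
    (hf : LocallyIntegrable f volume) (hg : ContDiff ℝ (⊤:ℕ∞) g) (hcg : HasCompactSupport g) :
    pderiv1 n i (f ⋆[Lmul] g) = f ⋆[Lmul] (pderiv1 n i g) := by
  funext x
  have hd := hcg.hasFDerivAt_convolution_right Lmul hf (hg.of_le (by simp)) x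
  have h1 : fderiv ℝ (f ⋆[Lmul] g) x = (f ⋆[Lmul.precompR (En n)] fderiv ℝ g) x := hd.fderiv
  have h2 := convolution_precompR_apply (L := Lmul) hf (hcg.fderiv ℝ)
    (hg.continuous_fderiv (by simp)) x (EuclideanSpace.single i 1)
  simp only [pderiv1, h1, h2]
  rfl

lemma pdList_convolution (n : ℕ) (l : List (Fin n)) {f g : En n → ℝ}
    (hf : LocallyIntegrable f volume) (hg : ContDiff ℝ (⊤:ℕ∞) g) (hcg : HasCompactSupport g) :
    pdList n l (f ⋆[Lmul] g) = f ⋆[Lmul] (pdList n l g) := by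
  induction l with
  | nil => rfl
  | cons i l ih =>
      rw [pdList_cons, ih, pderiv1_convolution n i hf (pdList_contDiff n l hg)
        (pdList_hasCompactSupport n l hcg)]
      rfl

lemma pderiv1_comp_smul (n : ℕ) (i : Fin n) {g : En n → ℝ} (hg : ContDiff ℝ (⊤:ℕ∞) g) (c : ℝ) :
    pderiv1 n i (fun x => g (c • x)) = fun x => c * pderiv1 n i g (c • x) := by
  funext x
  have hinner : HasFDerivAt (fun x : En n => c • x)
      (c • ContinuousLinearMap.id ℝ (En n)) x := (hasFDerivAt_id x).const_smul c
  have houter : HasFDerivAt g (fderiv ℝ g (c • x)) (c • x) :=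
    (hg.differentiable (by simp) (c • x)).hasFDerivAt
  have hcomp := houter.comp x hinner
  show fderiv ℝ (g ∘ fun x : En n => c • x) x (EuclideanSpace.single i 1) = _
  rw [hcomp.fderiv]
  simp only [ContinuousLinearMap.coe_comp', Function.comp_apply,
    ContinuousLinearMap.smul_apply, ContinuousLinearMap.id_apply, _root_.map_smul, smul_eq_mul]
  rfl

lemma pderiv1_const_mul (n : ℕ) (i : Fin n) {ψ : En n → ℝ} (hψ : ContDiff ℝ (⊤:ℕ∞) ψ) (a : ℝ) :
    pderiv1 n i (fun x => a * ψ x) = fun x => a * pderiv1 n i ψ x := by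
  funext x
  simp [pderiv1, fderiv_const_mul (hψ.differentiable (by simp) x)]

lemma pdList_comp_smul (n : ℕ) (l : List (Fin n)) {g : En n → ℝ} (hg : ContDiff ℝ (⊤:ℕ∞) g) (c : ℝ) :
    pdList n l (fun x => g (c • x)) = fun x => c ^ l.length * pdList n l g (c • x) := by
  induction l with
  | nil => simp
  | cons i l ih =>
      have hsm : ContDiff ℝ (⊤:ℕ∞) (pdList n l g) := pdList_contDiff n l hg
      rw [pdList_cons, ih, pderiv1_const_mul n i (by
        exact hsm.comp (contDiff_id.const_smul c)) (c ^ l.length)]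
      funext x
      rw [show (fun x => pdList n l g (c • x)) = (fun x => (pdList n l g) (c • x)) from rfl,
        pderiv1_comp_smul n i hsm c]
      simp only [List.length_cons, pdList_cons, pow_succ]
      ring

lemma bump_package (n m : ℕ) (hm : 0 < m) :
    ∃ K > (0:ℝ), ∀ r₁ r₂ : ℝ, 0 < r₁ → r₁ < r₂ →
      ∃ φ : En n → ℝ, ContDiff ℝ (⊤ : ℕ∞) φ ∧ HasCompactSupport φ ∧
        (∀ x, 0 ≤ φ x) ∧ (∀ x, φ x ≤ 1) ∧
        (∀ x ∈ ball (0 : En n) r₁, φ x = 1) ∧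
        (∀ x, x ∉ closedBall (0 : En n) r₂ → φ x = 0) ∧
        (∀ l : List (Fin n), l.length = m → ∀ x,
          |pdList n l φ x| ≤ K / (r₂ - r₁) ^ m *
            (closedBall (0 : En n) r₂ \ ball (0 : En n) r₁).indicator (fun _ => 1) x) := by
  classical
  set θb : ContDiffBump (0 : En n) := ⟨1/2, 1, by norm_num, by norm_num⟩ with hθb
  set θ : En n → ℝ := fun x => θb x with hθ
  have hθ_smooth : ContDiff ℝ (⊤:ℕ∞) θ := θb.contDiff
  have hθ_supp : HasCompactSupport θ := θb.hasCompactSupport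
  have hθ_nonneg : ∀ x, 0 ≤ θ x := θb.nonneg'
  have hθ_int_pos : (0:ℝ) < ∫ x, θ x := θb.integral_pos
  set Iθ : ℝ := ∫ x, θ x with hIθ
  set J : ℝ := ∑ v : List.Vector (Fin n) m, ∫ t, |pdList n v.toList θ t| with hJ
  have hJ0 : 0 ≤ J :=
    Finset.sum_nonneg fun v _ => integral_nonneg fun t => abs_nonneg _
  refine ⟨2 ^ m * (J + 1) / Iθ, by positivity, fun r₁ r₂ hr₁ hr12 => ?_⟩
  set ε : ℝ := (r₂ - r₁) / 2 with hε
  have hε_pos : 0 < ε := by simp [hε]; linarith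
  set c : ℝ := (r₁ + r₂) / 2 with hc
  have hcr : c - ε = r₁ := by simp [hc, hε]; ring
  have hcr2 : c + ε = r₂ := by simp [hc, hε]; ring
  set θε : En n → ℝ := fun x => θ (ε⁻¹ • x) with hθε
  have θε_smooth : ContDiff ℝ (⊤:ℕ∞) θε := hθ_smooth.comp (contDiff_id.const_smul ε⁻¹)
  have θε_zero : ∀ y : En n, ε ≤ ‖y‖ → θε y = 0 := by
    intro y hy
    have : ε⁻¹ • y ∉ Function.support θ := by
      rw [hθ]
      intro hsup
      have h1 : ‖ε⁻¹ • y‖ < 1 := by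
        have := θb.support_eq ▸ hsup
        simpa [mem_ball, dist_zero_right] using this
      rw [norm_smul, Real.norm_eq_abs, abs_inv, abs_of_pos hε_pos] at h1
      have : (1:ℝ) ≤ ε⁻¹ * ‖y‖ := by
        rw [← inv_mul_cancel₀ hε_pos.ne']
        exact mul_le_mul_of_nonneg_left hy (by positivity)
      linarith
    simpa [hθε] using Function.notMem_support.mp this
  have θε_supp : HasCompactSupport θε := by
    apply HasCompactSupport.intro (isCompact_closedBall (0 : En n) ε)
    intro x hx
    exact θε_zero x (le_of_lt (by simpa [mem_closedBall, dist_zero_right, not_le] using hx))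
  have θε_nonneg : ∀ x, 0 ≤ θε x := fun x => hθ_nonneg _
  have θε_int : Integrable θε volume :=
    θε_smooth.continuous.integrable_of_hasCompactSupport θε_supp
  have hfinrank : Module.finrank ℝ (En n) = n := finrank_euclideanSpace_fin
  have hIθε : ∫ t, θε t = ε ^ n * Iθ := by
    rw [hθε]
    rw [Measure.integral_comp_smul volume θ ε⁻¹, hfinrank, smul_eq_mul]
    congr 1
    rw [← inv_pow, inv_inv, abs_of_pos (by positivity)]
  have hIθε_pos : (0:ℝ) < ∫ t, θε t := by rw [hIθε]; positivity
  set Iε : ℝ := ∫ t, θε t with hIε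
  set f : En n → ℝ := Set.indicator (ball (0 : En n) c) (fun _ => Iε⁻¹) with hf
  have hf_int : Integrable f volume := by
    refine IntegrableOn.integrable_indicator ?_ measurableSet_ball
    exact integrableOn_const measure_ball_lt_top.ne
  have hf_loc : LocallyIntegrable f volume := hf_int.locallyIntegrable
  have hf_abs : ∀ t, |f t| ≤ Iε⁻¹ := by
    intro t
    rw [hf]
    by_cases ht : t ∈ ball (0 : En n) c
    · rw [Set.indicator_of_mem ht]; rw [abs_of_nonneg (by positivity)]
    · rw [Set.indicator_of_notMem ht]; simpa using by positivity
  have hf_nonneg : ∀ t, 0 ≤ f t := by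
    intro t; rw [hf]
    exact Set.indicator_nonneg (fun _ _ => by positivity) t
  set φ : En n → ℝ := f ⋆[Lmul] θε with hφ
  have φ_smooth : ContDiff ℝ (⊤:ℕ∞) φ :=
    θε_supp.contDiff_convolution_right Lmul hf_loc θε_smooth
  have φ_eval : ∀ x, φ x = ∫ t, f t * θε (x - t) := fun x => by
    rw [hφ, convolution_def]; rfl
  have φ_one : ∀ x ∈ ball (0 : En n) r₁, φ x = 1 := by
    intro x hx
    rw [mem_ball, dist_zero_right] at hx
    have key : ∀ t, f t * θε (x - t) = Iε⁻¹ * θε (x - t) := by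
      intro t
      by_cases ht : t ∈ ball (0 : En n) c
      · rw [hf, Set.indicator_of_mem ht]
      · have hnt : c ≤ ‖t‖ := by simpa [mem_ball, dist_zero_right, not_lt] using ht
        have : θε (x - t) = 0 := by
          apply θε_zero
          have h1 : ‖t‖ - ‖x‖ ≤ ‖x - t‖ := by
            rw [norm_sub_rev]; exact norm_sub_norm_le t x
          linarith [hcr]
        rw [this, mul_zero, mul_zero]
    rw [φ_eval x]
    simp_rw [key]
    rw [MeasureTheory.integral_const_mul, integral_sub_left_eq_self θε volume x, ← hIε,
      inv_mul_cancel₀ hIθε_pos.ne']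
  have φ_zero : ∀ x, x ∉ closedBall (0 : En n) r₂ → φ x = 0 := by
    intro x hx
    rw [mem_closedBall, dist_zero_right, not_le] at hx
    have key : ∀ t, f t * θε (x - t) = 0 := by
      intro t
      by_cases ht : t ∈ ball (0 : En n) c
      · have hnt : ‖t‖ < c := by simpa [mem_ball, dist_zero_right] using ht
        have : θε (x - t) = 0 := by
          apply θε_zero
          have h1 : ‖x‖ - ‖t‖ ≤ ‖x - t‖ := norm_sub_norm_le x t
          linarith [hcr2]
        rw [this, mul_zero]
      · rw [hf, Set.indicator_of_notMem ht, zero_mul]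
    rw [φ_eval x]
    simp_rw [key, integral_zero]
  have φ_nonneg : ∀ x, 0 ≤ φ x := by
    intro x
    rw [φ_eval x]
    exact integral_nonneg fun t => mul_nonneg (hf_nonneg t) (θε_nonneg _)
  have φ_le_one : ∀ x, φ x ≤ 1 := by
    intro x
    rw [φ_eval x]
    calc ∫ t, f t * θε (x - t) ≤ ∫ t, Iε⁻¹ * θε (x - t) := by
          refine integral_mono_of_nonneg
            (Eventually.of_forall fun t => mul_nonneg (hf_nonneg t) (θε_nonneg _))
            ((θε_int.comp_sub_left x).const_mul _) (Eventually.of_forall fun t => ?_)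
          exact mul_le_mul_of_nonneg_right ((le_abs_self _).trans (hf_abs t)) (θε_nonneg _)
      _ = 1 := by
          rw [MeasureTheory.integral_const_mul, integral_sub_left_eq_self θε volume x, ← hIε,
            inv_mul_cancel₀ hIθε_pos.ne']
  refine ⟨φ, φ_smooth, ?_, φ_nonneg, φ_le_one, φ_one, φ_zero, ?_⟩
  · apply HasCompactSupport.intro (isCompact_closedBall (0 : En n) r₂)
    exact φ_zero
  intro l hl x
  have hlne : l ≠ [] := by
    intro h; rw [h] at hl; simp at hl; omega
  by_cases hx : x ∈ closedBall (0 : En n) r₂ \ ball (0 : En n) r₁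
  · -- main bound
    rw [Set.indicator_of_mem hx, mul_one]
    have hpd : pdList n l φ = f ⋆[Lmul] pdList n l θε :=
      pdList_convolution n l hf_loc θε_smooth θε_supp
    have hscale : pdList n l θε = fun t => (ε⁻¹) ^ m * pdList n l θ (ε⁻¹ • t) := by
      rw [hθε, pdList_comp_smul n l hθ_smooth ε⁻¹, hl]
    have hcont : Continuous (pdList n l θε) := (pdList_contDiff n l θε_smooth).continuous
    have hcs : HasCompactSupport (pdList n l θε) := pdList_hasCompactSupport n l θε_supp
    have hbound := conv_abs_le n f (pdList n l θε) Iε⁻¹ hf_abs hcont hcs x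
    rw [hpd]
    refine hbound.trans ?_
    have hintθε : ∫ t, |pdList n l θε t| = (ε⁻¹) ^ m * (ε ^ n * ∫ t, |pdList n l θ t|) := by
      simp_rw [hscale]
      rw [show (fun t => |(ε⁻¹) ^ m * pdList n l θ (ε⁻¹ • t)|)
            = fun t => (ε⁻¹) ^ m * |pdList n l θ (ε⁻¹ • t)| from funext fun t => by
          rw [abs_mul, abs_of_nonneg (by positivity)]]
      rw [MeasureTheory.integral_const_mul,
        Measure.integral_comp_smul volume (fun t => |pdList n l θ t|) ε⁻¹, hfinrank,
        smul_eq_mul, ← inv_pow, inv_inv, abs_of_pos (by positivity : (0:ℝ) < ε ^ n)]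
    have hJl : ∫ t, |pdList n l θ t| ≤ J := by
      rw [hJ]
      let v : List.Vector (Fin n) m := ⟨l, hl⟩
      have hv : ∫ t, |pdList n l θ t| = ∫ t, |pdList n v.toList θ t| := rfl
      rw [hv]
      exact Finset.single_le_sum
        (f := fun v : List.Vector (Fin n) m => ∫ t, |pdList n v.toList θ t|)
        (fun v _ => integral_nonneg fun t => abs_nonneg _)
        (Finset.mem_univ v)
    rw [hintθε, hIθε]
    have hεm : (ε⁻¹) ^ m = 2 ^ m / (r₂ - r₁) ^ m := by
      rw [hε, inv_div, div_pow]
    have halg : ∀ (e I X p : ℝ), e ≠ 0 → I ≠ 0 →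
        (e * I)⁻¹ * (p * (e * X)) = p * (X / I) := by
      intro e I X p he hI
      field_simp
    have halg2 : ∀ (a b c d : ℝ), (a / b) * (c / d) = a * c / d / b := by
      intro a b c d
      rw [div_mul_div_comm, div_div]
      ring_nf
    calc (ε ^ n * Iθ)⁻¹ * ((ε⁻¹) ^ m * (ε ^ n * ∫ t, |pdList n l θ t|))
        = (ε⁻¹) ^ m * ((∫ t, |pdList n l θ t|) / Iθ) :=
          halg _ _ _ _ (by positivity) hθ_int_pos.ne'
      _ ≤ (ε⁻¹) ^ m * ((J + 1) / Iθ) := by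
          refine mul_le_mul_of_nonneg_left ?_ (by positivity)
          refine div_le_div_of_nonneg_right ?_ hθ_int_pos.le
          linarith
      _ = 2 ^ m * (J + 1) / Iθ / (r₂ - r₁) ^ m := by
          rw [hεm, halg2]
  · -- derivative vanishes
    rw [Set.indicator_of_notMem hx, mul_zero]
    have hx' : x ∈ ball (0 : En n) r₁ ∨ x ∉ closedBall (0 : En n) r₂ := by
      by_cases h1 : x ∈ closedBall (0 : En n) r₂
      · left
        by_contra h2
        exact hx ⟨h1, h2⟩
      · right; exact h1
    have : pdList n l φ x = 0 := by
      rcases hx' with h | h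
      · exact pdList_eqOn_zero n l hlne isOpen_ball (fun y hy => φ_one y hy) h
      · refine pdList_eqOn_zero n l hlne (Metric.isClosed_closedBall (x := (0:En n)) (ε := r₂)).isOpen_compl
          (fun y hy => φ_zero y hy) h
    rw [this]
    simp


lemma annulus_estimate (n m : ℕ) (hn : 0 < n) (hm : 0 < m) (A : ℝ) (hA : 0 < A)
    (K : ℝ) (hK : 0 < K)
    (hbump : ∀ r₁ r₂ : ℝ, 0 < r₁ → r₁ < r₂ →
      ∃ φ : En n → ℝ, ContDiff ℝ (⊤ : ℕ∞) φ ∧ HasCompactSupport φ ∧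
        (∀ x, 0 ≤ φ x) ∧ (∀ x, φ x ≤ 1) ∧
        (∀ x ∈ ball (0 : En n) r₁, φ x = 1) ∧
        (∀ x, x ∉ closedBall (0 : En n) r₂ → φ x = 0) ∧
        (∀ l : List (Fin n), l.length = m → ∀ x,
          |pdList n l φ x| ≤ K / (r₂ - r₁) ^ m *
            (closedBall (0 : En n) r₂ \ ball (0 : En n) r₁).indicator (fun _ => 1) x))
    (a : (Fin n → ℕ) → En n → ℝ → ℝ)
    (ha : ∀ α, ∀ᵐ x : En n ∂volume, ∀ ζ : ℝ, |a α x ζ| ≤ A * |ζ|)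
    (F u : En n → ℝ) (hu : LocallyIntegrable u volume)
    (hF : LocallyIntegrable F volume) (hFnn : ∀ x, 0 ≤ F x)
    (hineq : ∀ φ : En n → ℝ, ContDiff ℝ (⊤ : ℕ∞) φ → HasCompactSupport φ →
      (∀ x, 0 ≤ φ x) →
      ((-1 : ℝ) ^ m * ∫ x, ∑ α ∈ multiIndices n m, a α x (u x) * pderivMulti n α φ x
        ≥ ∫ x, F x * φ x))
    (r₁ r₂ : ℝ) (hr₁ : 0 < r₁) (hr12 : r₁ < r₂) :
    (1 / (((multiIndices n m).card + 1) * A * K)) * (r₂ - r₁) ^ m *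
        ∫ x in ball (0 : En n) r₁, F x
      ≤ ∫ x in ball (0 : En n) r₂ \ ball (0 : En n) r₁, |u x| := by
  classical
  haveI : Nontrivial (En n) := by
    haveI : Nonempty (Fin n) := Fin.pos_iff_nonempty.mp hn
    exact ⟨EuclideanSpace.single (Classical.arbitrary (Fin n)) 1, 0, by
      intro h
      have := congrFun (congrArg (fun v : En n => (v : Fin n → ℝ)) h)
        (Classical.arbitrary (Fin n))
      simpa using this⟩
  obtain ⟨φ, φ_smooth, φ_cpt, φ_nonneg, φ_le_one, φ_one, φ_zero, φ_deriv⟩ :=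
    hbump r₁ r₂ hr₁ hr12
  set N : ℕ := (multiIndices n m).card with hN
  set ann : Set (En n) := closedBall (0 : En n) r₂ \ ball (0 : En n) r₁ with hann
  set ann₀ : Set (En n) := ball (0 : En n) r₂ \ ball (0 : En n) r₁ with hann₀
  have hann_meas : MeasurableSet ann := measurableSet_closedBall.diff measurableSet_ball
  have hrr : (0:ℝ) < r₂ - r₁ := by linarith
  set cst : ℝ := (N + 1) * A * (K / (r₂ - r₁) ^ m) with hcst
  have hcst_pos : 0 < cst := by positivity
  -- step 1 : ∫_{B r₁} F ≤ ∫ F φ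
  have hGint : Integrable ((closedBall (0 : En n) r₂).indicator F) volume :=
    (hF.integrableOn_isCompact (isCompact_closedBall _ _)).integrable_indicator
      measurableSet_closedBall
  have hFφ_int : Integrable (fun x => F x * φ x) volume := by
    have h1 : Integrable (fun x => φ x * (closedBall (0 : En n) r₂).indicator F x) volume :=
      hGint.bdd_mul φ_smooth.continuous.aestronglyMeasurable
        (c := 1) (Eventually.of_forall fun x => by
          rw [Real.norm_eq_abs, abs_of_nonneg (φ_nonneg x)]; exact φ_le_one x)
    refine h1.congr (Eventually.of_forall fun x => ?_)
    show φ x * (closedBall (0 : En n) r₂).indicator F x = F x * φ x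
    by_cases hx : x ∈ closedBall (0 : En n) r₂
    · rw [Set.indicator_of_mem hx, mul_comm]
    · rw [Set.indicator_of_notMem hx, mul_zero, φ_zero x hx, mul_zero]
  have step1 : ∫ x in ball (0 : En n) r₁, F x ≤ ∫ x, F x * φ x := by
    rw [← integral_indicator measurableSet_ball]
    refine integral_mono_of_nonneg
      (Eventually.of_forall fun x => Set.indicator_nonneg (fun y _ => hFnn y) x)
      hFφ_int (Eventually.of_forall fun x => ?_)
    show (ball (0 : En n) r₁).indicator F x ≤ F x * φ x
    by_cases hx : x ∈ ball (0 : En n) r₁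
    · rw [Set.indicator_of_mem hx, φ_one x hx, mul_one]
    · rw [Set.indicator_of_notMem hx]
      exact mul_nonneg (hFnn x) (φ_nonneg x)
  -- step 2 : solution inequality
  have step2 : ∫ x, F x * φ x ≤
      (-1 : ℝ) ^ m * ∫ x, ∑ α ∈ multiIndices n m, a α x (u x) * pderivMulti n α φ x :=
    hineq φ φ_smooth φ_cpt φ_nonneg
  -- step 3 and 4
  set I : ℝ := ∫ x, ∑ α ∈ multiIndices n m, a α x (u x) * pderivMulti n α φ x with hI
  have step3 : (-1 : ℝ) ^ m * I ≤
      ∫ x, |∑ α ∈ multiIndices n m, a α x (u x) * pderivMulti n α φ x| := by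
    have h1 : (-1 : ℝ) ^ m * I ≤ |I| := by
      calc (-1 : ℝ) ^ m * I ≤ |(-1 : ℝ) ^ m * I| := le_abs_self _
        _ = |I| := by rw [abs_mul, abs_pow, abs_neg, abs_one, one_pow, one_mul]
    refine h1.trans ?_
    simpa [Real.norm_eq_abs] using norm_integral_le_integral_norm
      (fun x => ∑ α ∈ multiIndices n m, a α x (u x) * pderivMulti n α φ x) (μ := volume)
  -- step 5 : domination
  set D : En n → ℝ := ann.indicator (fun x => cst * |u x|) with hD
  have hD_int : Integrable D volume := by
    refine IntegrableOn.integrable_indicator ?_ hann_meas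
    have h1 : IntegrableOn (fun x => |u x|) ann volume :=
      ((hu.integrableOn_isCompact (isCompact_closedBall _ _)).mono_set diff_subset).norm
    exact h1.const_mul cst
  have step5 : ∫ x, |∑ α ∈ multiIndices n m, a α x (u x) * pderivMulti n α φ x|
      ≤ ∫ x, D x := by
    have haa : ∀ᵐ x : En n ∂volume, ∀ α, ∀ ζ : ℝ, |a α x ζ| ≤ A * |ζ| := ae_all_iff.mpr ha
    refine integral_mono_of_nonneg (Eventually.of_forall fun x => abs_nonneg _) hD_int ?_
    filter_upwards [haa] with x hx
    have hterm : ∀ α ∈ multiIndices n m,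
        |a α x (u x) * pderivMulti n α φ x| ≤
          (A * |u x|) * (K / (r₂ - r₁) ^ m * ann.indicator (fun _ => 1) x) := by
      intro α hα
      rw [abs_mul]
      have hlen : (dirs n α).length = m := by
        rw [dirs_length]
        exact (Finset.mem_filter.mp hα).2
      have hb := φ_deriv (dirs n α) hlen x
      rw [pderivMulti_eq_pdList]
      exact mul_le_mul (hx α (u x)) hb (abs_nonneg _) (by positivity)
    calc |∑ α ∈ multiIndices n m, a α x (u x) * pderivMulti n α φ x|
        ≤ ∑ α ∈ multiIndices n m, |a α x (u x) * pderivMulti n α φ x| :=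
          Finset.abs_sum_le_sum_abs _ _
      _ ≤ ∑ _α ∈ multiIndices n m,
            (A * |u x|) * (K / (r₂ - r₁) ^ m * ann.indicator (fun _ => 1) x) :=
          Finset.sum_le_sum hterm
      _ = N * ((A * |u x|) * (K / (r₂ - r₁) ^ m * ann.indicator (fun _ => 1) x)) := by
          rw [Finset.sum_const, nsmul_eq_mul, hN]
      _ ≤ D x := by
          by_cases hxa : x ∈ ann
          · rw [hD]
            rw [Set.indicator_of_mem hxa, Set.indicator_of_mem hxa, hcst, mul_one]
            have h0 : (0:ℝ) ≤ A * |u x| * (K / (r₂ - r₁) ^ m) := by positivity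
            nlinarith [h0]
          · rw [hD]
            rw [Set.indicator_of_notMem hxa, Set.indicator_of_notMem hxa]
            simp
  -- step 6 : compute ∫ D
  have hann_ae : ann =ᵐ[volume] ann₀ := by
    have hz : volume (sphere (0 : En n) r₂) = 0 := Measure.addHaar_sphere volume 0 r₂
    refine MeasureTheory.ae_eq_set.mpr ⟨measure_mono_null ?_ hz, ?_⟩
    · intro x hx
      obtain ⟨⟨hx1, hx2⟩, hx3⟩ := hx
      rw [hann₀, mem_diff] at hx3
      have hx4 : x ∉ ball (0 : En n) r₂ := fun h => hx3 ⟨h, hx2⟩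
      rw [mem_ball, dist_zero_right, not_lt] at hx4
      rw [mem_closedBall, dist_zero_right] at hx1
      rw [mem_sphere, dist_zero_right]
      linarith
    · rw [diff_eq_empty.mpr (diff_subset_diff_left ball_subset_closedBall)]
      exact measure_empty
  have step6 : ∫ x, D x = cst * ∫ x in ann₀, |u x| := by
    rw [hD, integral_indicator hann_meas, MeasureTheory.integral_const_mul,
      setIntegral_congr_set hann_ae]
  have chain : ∫ x in ball (0 : En n) r₁, F x ≤ cst * ∫ x in ann₀, |u x| := by
    linarith [step1, step2, step3, step5, step6]
  have hXnn : 0 ≤ ∫ x in ann₀, |u x| := by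
    refine setIntegral_nonneg (measurableSet_ball.diff measurableSet_ball) fun x _ => abs_nonneg _
  have h5 : (1 / ((N + 1) * A * K)) * (r₂ - r₁) ^ m * ∫ x in ball (0 : En n) r₁, F x
      ≤ (1 / ((N + 1) * A * K)) * (r₂ - r₁) ^ m * (cst * ∫ x in ann₀, |u x|) :=
    mul_le_mul_of_nonneg_left chain (by positivity)
  refine h5.trans ?_
  have hc1 : (1 / ((N + 1) * A * K)) * (r₂ - r₁) ^ m * cst = 1 := by
    rw [hcst]
    have h1 : ((N : ℝ) + 1) ≠ 0 := by positivity
    have h2 : (r₂ - r₁) ^ m ≠ 0 := by positivity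
    field_simp
  calc (1 / ((N + 1) * A * K)) * (r₂ - r₁) ^ m * (cst * ∫ x in ann₀, |u x|)
      = ((1 / ((N + 1) * A * K)) * (r₂ - r₁) ^ m * cst) * ∫ x in ann₀, |u x| := by ring
    _ = ∫ x in ann₀, |u x| := by rw [hc1, one_mul]
    _ ≤ ∫ x in ann₀, |u x| := le_rfl

end AuxLemmas
open Convolution Metric

/-- **Lemma 3.1.** There is a constant `C > 0`, depending only on `A`, `n`, `m₁`
and `m₂`, such that for every solution of the system and all `0 < r₁ < r₂ ≤ 2r₁`
the annulus estimates (3.1) and (3.2) hold. -/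
theorem lemma_3_1
    (n m₁ m₂ : ℕ) (hn : 0 < n) (hm₁ : 0 < m₁) (hm₂ : 0 < m₂)
    (A : ℝ) (hA : 0 < A) :
    ∃ C > (0:ℝ),
      ∀ (a b : (Fin n → ℕ) → En n → ℝ → ℝ) (f₁ f₂ : ℝ → ℝ),
        CaraBound n A a b → StdF f₁ → StdF f₂ →
        ∀ u₁ u₂ : En n → ℝ, IsSolution n m₁ m₂ a b f₁ f₂ u₁ u₂ →
        ∀ r₁ r₂ : ℝ, 0 < r₁ → r₁ < r₂ → r₂ ≤ 2 * r₁ →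
          (C * (r₂ - r₁) ^ m₁ * ∫ x in Metric.ball (0 : En n) r₁, f₁ |u₂ x| ≤
            ∫ x in Metric.ball (0 : En n) r₂ \ Metric.ball (0 : En n) r₁, |u₁ x|) ∧
          (C * (r₂ - r₁) ^ m₂ * ∫ x in Metric.ball (0 : En n) r₁, f₂ |u₁ x| ≤
            ∫ x in Metric.ball (0 : En n) r₂ \ Metric.ball (0 : En n) r₁, |u₂ x|) := by
  classical
  obtain ⟨K₁, hK₁, hb₁⟩ := bump_package n m₁ hm₁
  obtain ⟨K₂, hK₂, hb₂⟩ := bump_package n m₂ hm₂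
  set C₁ : ℝ := 1 / (((multiIndices n m₁).card + 1) * A * K₁) with hC₁
  set C₂ : ℝ := 1 / (((multiIndices n m₂).card + 1) * A * K₂) with hC₂
  have hC₁pos : 0 < C₁ := by rw [hC₁]; positivity
  have hC₂pos : 0 < C₂ := by rw [hC₂]; positivity
  refine ⟨min C₁ C₂, lt_min hC₁pos hC₂pos, ?_⟩
  intro a b f₁ f₂ hcara hf₁ hf₂ u₁ u₂ hsol r₁ r₂ hr₁ hr12 _hr2
  obtain ⟨_, _, _, _, hbound⟩ := hcara
  obtain ⟨hu₁, hu₂, hF₁, hF₂, hweak⟩ := hsol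
  have hpow₁ : (0:ℝ) ≤ (r₂ - r₁) ^ m₁ := pow_nonneg (by linarith) _
  have hpow₂ : (0:ℝ) ≤ (r₂ - r₁) ^ m₂ := pow_nonneg (by linarith) _
  constructor
  · have ha : ∀ α, ∀ᵐ x : En n ∂volume, ∀ ζ : ℝ, |a α x ζ| ≤ A * |ζ| := fun α =>
      (hbound α).mono fun x hx ζ => by
        have h1 := hx ζ
        have h2 := abs_nonneg (b α x ζ)
        linarith
    have est := annulus_estimate n m₁ hn hm₁ A hA K₁ hK₁ hb₁ a ha
      (fun x => f₁ |u₂ x|) u₁ hu₁ hF₁ (fun x => hf₁.2.2 _ (abs_nonneg _))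
      (fun φ h1 h2 h3 => (hweak φ h1 h2 h3).1) r₁ r₂ hr₁ hr12
    have hnn : 0 ≤ ∫ x in Metric.ball (0 : En n) r₁, f₁ |u₂ x| :=
      setIntegral_nonneg measurableSet_ball fun x _ => hf₁.2.2 _ (abs_nonneg _)
    calc min C₁ C₂ * (r₂ - r₁) ^ m₁ * ∫ x in Metric.ball (0 : En n) r₁, f₁ |u₂ x|
        ≤ C₁ * (r₂ - r₁) ^ m₁ * ∫ x in Metric.ball (0 : En n) r₁, f₁ |u₂ x| := by
          refine mul_le_mul_of_nonneg_right
            (mul_le_mul_of_nonneg_right (min_le_left _ _) hpow₁) hnn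
      _ ≤ ∫ x in Metric.ball (0 : En n) r₂ \ Metric.ball (0 : En n) r₁, |u₁ x| := est
  · have hb : ∀ α, ∀ᵐ x : En n ∂volume, ∀ ζ : ℝ, |b α x ζ| ≤ A * |ζ| := fun α =>
      (hbound α).mono fun x hx ζ => by
        have h1 := hx ζ
        have h2 := abs_nonneg (a α x ζ)
        linarith
    have est := annulus_estimate n m₂ hn hm₂ A hA K₂ hK₂ hb₂ b hb
      (fun x => f₂ |u₁ x|) u₂ hu₂ hF₂ (fun x => hf₂.2.2 _ (abs_nonneg _))
      (fun φ h1 h2 h3 => (hweak φ h1 h2 h3).2) r₁ r₂ hr₁ hr12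
    have hnn : 0 ≤ ∫ x in Metric.ball (0 : En n) r₁, f₂ |u₁ x| :=
      setIntegral_nonneg measurableSet_ball fun x _ => hf₂.2.2 _ (abs_nonneg _)
    calc min C₁ C₂ * (r₂ - r₁) ^ m₂ * ∫ x in Metric.ball (0 : En n) r₁, f₂ |u₁ x|
        ≤ C₂ * (r₂ - r₁) ^ m₂ * ∫ x in Metric.ball (0 : En n) r₁, f₂ |u₁ x| := by
          refine mul_le_mul_of_nonneg_right
            (mul_le_mul_of_nonneg_right (min_le_right _ _) hpow₂) hnn
      _ ≤ ∫ x in Metric.ball (0 : En n) r₂ \ Metric.ball (0 : En n) r₁, |u₂ x| := est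
end
end

section
/- (Lemma 3.3, first inequality.) Let g : [1,∞) → (0,∞) be a non-decreasing continuous function such that liminf_{ζ→∞} g(ζ^κ)/g(ζ) > 0 for every κ ∈ (0,1). Then there exist constants C > 0 and σ > 0 such that g(ζ) ≤ C (log ζ)^σ for all ζ ∈ [e,∞). -/
open MeasureTheory Real Set Filter

noncomputable section

/-- **Lemma 3.3**, first inequality: a non-decreasing continuous
`g : [1,∞) → (0,∞)` with `liminf_{ζ→∞} g(ζ^κ)/g(ζ) > 0` for every `κ ∈ (0,1)`
grows at most logarithmically. -/
theorem lemma_3_3_first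
    (g : ℝ → ℝ) (hmono : MonotoneOn g (Ici 1)) (hcont : ContinuousOn g (Ici 1))
    (hpos : ∀ ζ : ℝ, 1 ≤ ζ → 0 < g ζ)
    (hliminf : ∀ κ ∈ Ioo (0:ℝ) 1, ∃ ε > (0:ℝ), ∃ M ≥ (1:ℝ),
      ∀ ζ ≥ M, ε ≤ g (ζ ^ κ) / g ζ) :
    ∃ C > (0:ℝ), ∃ σ > (0:ℝ), ∀ ζ ≥ Real.exp 1, g ζ ≤ C * Real.log ζ ^ σ := by
  obtain ⟨ε, hε, M, hM, hεM⟩ := hliminf (1/2) ⟨by norm_num, by norm_num⟩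
  set ε' : ℝ := min ε (1/2) with hε'def
  have hε'pos : 0 < ε' := lt_min hε (by norm_num)
  have hε'le : ε' ≤ 1/2 := min_le_right _ _
  set B : ℝ := max M (Real.exp 2) with hBdef
  have hBe : Real.exp 2 ≤ B := le_max_right _ _
  have hB1 : (1:ℝ) ≤ B := le_trans (by
    calc (1:ℝ) = Real.exp 0 := (Real.exp_zero).symm
    _ ≤ Real.exp 2 := Real.exp_le_exp.mpr (by norm_num)) hBe
  have hBM : M ≤ B := le_max_left _ _
  set C : ℝ := g B with hCdef
  have hCpos : 0 < C := hpos B hB1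
  have hε'inv : (1:ℝ) < ε'⁻¹ := by
    rw [lt_inv_comm₀ one_pos hε'pos]; simpa using lt_of_le_of_lt hε'le (by norm_num)
  set σ : ℝ := Real.log ε'⁻¹ / Real.log 2 with hσdef
  have hσpos : 0 < σ := div_pos (Real.log_pos hε'inv) (Real.log_pos one_lt_two)
  have hhalf : (1/2:ℝ) ^ σ = ε' := by
    rw [Real.rpow_def_of_pos (by norm_num : (0:ℝ) < 1/2)]
    rw [show Real.log (1/2) = -Real.log 2 by rw [one_div, Real.log_inv]]
    rw [hσdef, Real.log_inv]
    have h2 : Real.log 2 ≠ 0 := ne_of_gt (Real.log_pos one_lt_two)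
    rw [show -Real.log 2 * (-Real.log ε' / Real.log 2) = Real.log ε' by
      field_simp]
    exact Real.exp_log hε'pos
  -- key step
  have key : ∀ ζ, B ≤ ζ → g ζ ≤ ε'⁻¹ * g (ζ ^ (1/2:ℝ)) := by
    intro ζ hζ
    have hζ1 : (1:ℝ) ≤ ζ := le_trans hB1 hζ
    have hgζ : 0 < g ζ := hpos ζ hζ1
    have h1 : ε ≤ g (ζ ^ (1/2:ℝ)) / g ζ := hεM ζ (le_trans hBM hζ)
    have h2 : ε * g ζ ≤ g (ζ ^ (1/2:ℝ)) := (le_div_iff₀ hgζ).mp h1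
    have h3 : ε' * g ζ ≤ g (ζ ^ (1/2:ℝ)) :=
      le_trans (by nlinarith [min_le_left ε (1/2:ℝ)]) h2
    rw [← mul_le_mul_iff_right₀ hε'pos, ← mul_assoc, mul_inv_cancel₀ (ne_of_gt hε'pos),
      one_mul]
    exact h3
  have basecase : ∀ ζ, Real.exp 1 ≤ ζ → ζ ≤ B → g ζ ≤ C * Real.log ζ ^ σ := by
    intro ζ hζ hζB
    have hζ1 : (1:ℝ) ≤ ζ := le_trans (by
      calc (1:ℝ) = Real.exp 0 := (Real.exp_zero).symm
      _ ≤ Real.exp 1 := Real.exp_le_exp.mpr (by norm_num)) hζ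
    have hlog1 : (1:ℝ) ≤ Real.log ζ := by
      have := Real.log_le_log (Real.exp_pos 1) hζ
      rwa [Real.log_exp] at this
    have h1 : g ζ ≤ C := hmono hζ1 hB1 hζB
    have h2 : (1:ℝ) ≤ Real.log ζ ^ σ := Real.one_le_rpow hlog1 (le_of_lt hσpos)
    nlinarith
  have main : ∀ n : ℕ, ∀ ζ, Real.exp 1 ≤ ζ → Real.log ζ ≤ 2 ^ (n + 1) →
      g ζ ≤ C * Real.log ζ ^ σ := by
    intro n
    induction n with
    | zero =>
      intro ζ hζ hlog
      refine basecase ζ hζ (le_trans ?_ hBe)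
      have hζpos : 0 < ζ := lt_of_lt_of_le (Real.exp_pos 1) hζ
      calc ζ = Real.exp (Real.log ζ) := (Real.exp_log hζpos).symm
      _ ≤ Real.exp 2 := Real.exp_le_exp.mpr (by norm_num at hlog ⊢; linarith)
    | succ n ih =>
      intro ζ hζ hlog
      by_cases hcase : ζ ≤ B
      · exact basecase ζ hζ hcase
      push_neg at hcase
      have hζpos : 0 < ζ := lt_of_lt_of_le (Real.exp_pos 1) hζ
      have hζe2 : Real.exp 2 ≤ ζ := le_trans hBe (le_of_lt hcase)
      have hlog2 : (2:ℝ) ≤ Real.log ζ := by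
        have := Real.log_le_log (Real.exp_pos 2) hζe2
        rwa [Real.log_exp] at this
      have hsqrt1 : Real.exp 1 ≤ ζ ^ (1/2:ℝ) := by
        have h1 : Real.exp 2 ^ (1/2:ℝ) ≤ ζ ^ (1/2:ℝ) :=
          Real.rpow_le_rpow (le_of_lt (Real.exp_pos 2)) hζe2 (by norm_num)
        calc Real.exp 1 = Real.exp (2 * (1/2)) := by norm_num
        _ = Real.exp 2 ^ (1/2:ℝ) := Real.exp_mul 2 (1/2)
        _ ≤ ζ ^ (1/2:ℝ) := h1
      have hlogsqrt : Real.log (ζ ^ (1/2:ℝ)) = (1/2) * Real.log ζ :=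
        Real.log_rpow hζpos (1/2)
      have hlog' : Real.log (ζ ^ (1/2:ℝ)) ≤ 2 ^ (n + 1) := by
        rw [hlogsqrt]
        have : (2:ℝ) ^ (n + 1 + 1) = 2 * 2 ^ (n + 1) := by ring
        rw [this] at hlog
        linarith
      have hih := ih (ζ ^ (1/2:ℝ)) hsqrt1 hlog'
      have hstep := key ζ (le_of_lt hcase)
      have hlognn : (0:ℝ) ≤ Real.log ζ := by linarith
      have hrw : ((1/2:ℝ) * Real.log ζ) ^ σ = ε' * Real.log ζ ^ σ := by
        rw [Real.mul_rpow (by norm_num) hlognn, hhalf]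
      calc g ζ ≤ ε'⁻¹ * g (ζ ^ (1/2:ℝ)) := hstep
      _ ≤ ε'⁻¹ * (C * Real.log (ζ ^ (1/2:ℝ)) ^ σ) := by
          apply mul_le_mul_of_nonneg_left hih (le_of_lt (inv_pos.mpr hε'pos))
      _ = ε'⁻¹ * (C * (ε' * Real.log ζ ^ σ)) := by rw [hlogsqrt, hrw]
      _ = (ε'⁻¹ * ε') * (C * Real.log ζ ^ σ) := by ring
      _ = C * Real.log ζ ^ σ := by
          rw [inv_mul_cancel₀ (ne_of_gt hε'pos), one_mul]
  refine ⟨C, hCpos, σ, hσpos, fun ζ hζ => ?_⟩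
  obtain ⟨n, hn⟩ := pow_unbounded_of_one_lt (Real.log ζ) (one_lt_two (α := ℝ))
  exact main n ζ hζ (le_trans (le_of_lt hn) (by
    apply pow_le_pow_right₀ one_le_two (Nat.le_succ n)))
end
end

section
/- (Lemma 3.3, second inequality.) Let h : (0,1] → (0,∞) be a non-decreasing continuous function such that liminf_{ζ→0⁺} h(ζ)/h(ζ^κ) > 0 for every κ ∈ (0,1). Then there exist constants C > 0 and σ > 0 such that h(1/ζ) ≥ C (log ζ)^{−σ} for all ζ ∈ [e,∞). -/
open MeasureTheory Real Set Filter

noncomputable section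

/-- **Lemma 3.3**, second inequality: a non-decreasing continuous
`h : (0,1] → (0,∞)` with `liminf_{ζ→0⁺} h(ζ)/h(ζ^κ) > 0` for every `κ ∈ (0,1)`
decays at most logarithmically at zero. -/
theorem lemma_3_3_second
    (h : ℝ → ℝ) (hmono : MonotoneOn h (Ioc 0 1)) (hcont : ContinuousOn h (Ioc 0 1))
    (hpos : ∀ ζ ∈ Ioc (0:ℝ) 1, 0 < h ζ)
    (hliminf : ∀ κ ∈ Ioo (0:ℝ) 1, ∃ ε > (0:ℝ), ∃ δ ∈ Ioo (0:ℝ) 1,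
      ∀ ζ ∈ Ioo (0:ℝ) δ, ε ≤ h ζ / h (ζ ^ κ)) :
    ∃ C > (0:ℝ), ∃ σ > (0:ℝ), ∀ ζ ≥ Real.exp 1,
      C * Real.log ζ ^ (-σ) ≤ h (1 / ζ) := by
  obtain ⟨ε₀, hε₀pos, δ, hδ, hkey⟩ := hliminf (1/2) ⟨by norm_num, by norm_num⟩
  set ε : ℝ := min ε₀ (1/2) with hεdef
  have hεpos : 0 < ε := lt_min hε₀pos (by norm_num)
  have hεle : ε ≤ 1/2 := min_le_right _ _
  have hεlt1 : ε < 1 := lt_of_le_of_lt hεle (by norm_num)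
  set L : ℝ := max (Real.log (1/δ) + 1) 1 with hLdef
  have hL1 : (1:ℝ) ≤ L := le_max_right _ _
  have hLpos : (0:ℝ) < L := lt_of_lt_of_le one_pos hL1
  have hLgt : Real.log (1/δ) < L :=
    lt_of_lt_of_le (by linarith) (le_max_left _ _)
  have hδpos : 0 < δ := hδ.1
  set s : ℕ → ℝ := fun k => Real.exp (-((2:ℝ)^k * L)) with hsdef
  have h2k1 : ∀ k : ℕ, (1:ℝ) ≤ 2^k := fun k => one_le_pow₀ (by norm_num)
  have hs_pos : ∀ k, 0 < s k := fun k => Real.exp_pos _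
  have hs_le : ∀ k, s k ≤ Real.exp (-L) := by
    intro k
    apply Real.exp_le_exp.mpr
    have := h2k1 k
    nlinarith
  have hexpL_le1 : Real.exp (-L) ≤ 1 := Real.exp_le_one_iff.mpr (by linarith)
  have hs_mem : ∀ k, s k ∈ Ioc (0:ℝ) 1 := fun k => ⟨hs_pos k, le_trans (hs_le k) hexpL_le1⟩
  have hs_lt_δ : ∀ k, s k < δ := by
    intro k
    have h1 : Real.exp (-L) < δ := by
      have : -L < Real.log δ := by
        rw [one_div, Real.log_inv] at hLgt; linarith
      calc Real.exp (-L) < Real.exp (Real.log δ) := Real.exp_lt_exp.mpr this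
        _ = δ := Real.exp_log hδpos
    exact lt_of_le_of_lt (hs_le k) h1
  have hiter : ∀ k, ε ^ k * h (s 0) ≤ h (s k) := by
    intro k
    induction k with
    | zero => simp
    | succ k ih =>
      have hmem : s (k+1) ∈ Ioo (0:ℝ) δ := ⟨hs_pos _, hs_lt_δ _⟩
      have hsqrt : (s (k+1)) ^ ((1:ℝ)/2) = s k := by
        rw [hsdef]
        simp only []
        rw [Real.rpow_def_of_pos (Real.exp_pos _), Real.log_exp]
        congr 1
        rw [pow_succ]
        ring
      have h2 : ε₀ ≤ h (s (k+1)) / h (s k) := by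
        have := hkey _ hmem
        rwa [hsqrt] at this
      have hskpos : 0 < h (s k) := hpos _ (hs_mem k)
      have h3 : ε₀ * h (s k) ≤ h (s (k+1)) := (le_div_iff₀ hskpos).mp h2
      have h4 : ε * h (s k) ≤ h (s (k+1)) := by
        have : ε * h (s k) ≤ ε₀ * h (s k) :=
          mul_le_mul_of_nonneg_right (min_le_left _ _) hskpos.le
        linarith
      calc ε ^ (k+1) * h (s 0) = ε * (ε ^ k * h (s 0)) := by ring
        _ ≤ ε * h (s k) := mul_le_mul_of_nonneg_left ih hεpos.le
        _ ≤ h (s (k+1)) := h4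
  set σ : ℝ := -Real.log ε / Real.log 2 with hσdef
  have hlogε : Real.log ε < 0 := Real.log_neg hεpos hεlt1
  have hσpos : 0 < σ := div_pos (by linarith) (Real.log_pos one_lt_two)
  have hpow2 : ∀ k : ℕ, ((2:ℝ)^k) ^ (-σ) = ε ^ k := by
    intro k
    rw [← Real.rpow_natCast 2 k, ← Real.rpow_mul (by norm_num)]
    rw [Real.rpow_def_of_pos (by norm_num : (0:ℝ) < 2)]
    have hlog2 : Real.log 2 ≠ 0 := ne_of_gt (Real.log_pos one_lt_two)
    have : Real.log 2 * ((k:ℝ) * -σ) = (k:ℝ) * Real.log ε := by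
      field_simp [hσdef]
      rw [hσdef]; field_simp
    rw [this, Real.exp_nat_mul, Real.exp_log hεpos]
  set h0 : ℝ := h (s 0) with hh0
  have h0pos : 0 < h0 := hpos _ (hs_mem 0)
  set C : ℝ := min (ε * h0 * L ^ σ) h0 with hCdef
  have hLσpos : 0 < L ^ σ := Real.rpow_pos_of_pos hLpos σ
  have hCpos : 0 < C := lt_min (by positivity) h0pos
  refine ⟨C, hCpos, σ, hσpos, ?_⟩
  intro ζ hζ
  have hζpos : 0 < ζ := lt_of_lt_of_le (Real.exp_pos 1) hζ
  set t : ℝ := 1/ζ with htdef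
  have htpos : 0 < t := by positivity
  have hlogζ1 : (1:ℝ) ≤ Real.log ζ := by
    rw [Real.le_log_iff_exp_le hζpos]; simpa using hζ
  have hlogt : Real.log t = -Real.log ζ := by
    rw [htdef, one_div, Real.log_inv]
  have ht_le : t ≤ Real.exp (-1) := by
    rw [htdef, one_div, Real.exp_neg]
    exact inv_anti₀ (Real.exp_pos 1) hζ
  have ht_le1 : t ≤ 1 := le_trans ht_le (Real.exp_le_one_iff.mpr (by norm_num))
  have ht_mem : t ∈ Ioc (0:ℝ) 1 := ⟨htpos, ht_le1⟩
  have hrpow_nonneg : (0:ℝ) ≤ Real.log ζ ^ (-σ) := Real.rpow_nonneg (by linarith) _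
  by_cases hcase : t ≤ s 0
  · have hex : ∃ m, s (m+1) ≤ t := by
      obtain ⟨n, hn⟩ := pow_unbounded_of_one_lt ((-Real.log t) / L) (one_lt_two (α := ℝ))
      refine ⟨n, ?_⟩
      rw [hsdef]
      simp only []
      rw [← Real.exp_log htpos]
      apply Real.exp_le_exp.mpr
      have h2n : (2:ℝ)^n ≤ 2^(n+1) := by
        apply pow_le_pow_right₀ (by norm_num) (by omega)
      have : -Real.log t ≤ 2^(n+1) * L := by
        rw [div_lt_iff₀ hLpos] at hn
        nlinarith
      linarith
    set k := Nat.find hex with hkdef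
    have hk1 : s (k+1) ≤ t := Nat.find_spec hex
    have hk2 : t ≤ s k := by
      rcases Nat.eq_zero_or_pos k with h0k | h0k
      · rw [h0k]; exact hcase
      · have hmin := Nat.find_min hex (m := k - 1) (by omega)
        have hkk : k - 1 + 1 = k := by omega
        rw [hkk] at hmin
        exact (not_le.mp hmin).le
    have hskt : s (k+1) ∈ Ioc (0:ℝ) 1 := hs_mem _
    have hht : h (s (k+1)) ≤ h t := hmono hskt ht_mem hk1
    have hlogζ_ge : (2:ℝ)^k * L ≤ Real.log ζ := by
      have := (Real.log_le_iff_le_exp htpos).mpr (by rw [hsdef] at hk2; exact hk2)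
      rw [hlogt] at this; linarith
    have h2kLpos : (0:ℝ) < 2^k * L := by positivity
    have hbase : Real.log ζ ^ (-σ) ≤ ((2:ℝ)^k * L) ^ (-σ) :=
      Real.rpow_le_rpow_of_nonpos h2kLpos hlogζ_ge (by linarith)
    have hsplit : ((2:ℝ)^k * L) ^ (-σ) = ε ^ k * L ^ (-σ) := by
      rw [Real.mul_rpow (by positivity) hLpos.le, hpow2 k]
    have hLcancel : L ^ σ * L ^ (-σ) = 1 := by
      rw [← Real.rpow_add hLpos]; simp
    calc C * Real.log ζ ^ (-σ)
        ≤ (ε * h0 * L ^ σ) * Real.log ζ ^ (-σ) :=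
          mul_le_mul_of_nonneg_right (min_le_left _ _) hrpow_nonneg
      _ ≤ (ε * h0 * L ^ σ) * (((2:ℝ)^k * L) ^ (-σ)) :=
          mul_le_mul_of_nonneg_left hbase (by positivity)
      _ = ε ^ (k+1) * h0 * (L ^ σ * L ^ (-σ)) := by rw [hsplit]; ring
      _ = ε ^ (k+1) * h0 := by rw [hLcancel]; ring
      _ = ε ^ (k+1) * h (s 0) := rfl
      _ ≤ h (s (k+1)) := hiter (k+1)
      _ ≤ h t := hht
  · push_neg at hcase
    have hht : h0 ≤ h t := hmono (hs_mem 0) ht_mem hcase.le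
    have hle1 : Real.log ζ ^ (-σ) ≤ 1 :=
      Real.rpow_le_one_of_one_le_of_nonpos hlogζ1 (by linarith)
    calc C * Real.log ζ ^ (-σ) ≤ C * 1 :=
          mul_le_mul_of_nonneg_left hle1 hCpos.le
      _ = C := mul_one C
      _ ≤ h0 := min_le_right _ _
      _ ≤ h t := hht
end
end
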